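/- Define k : [0,∞) → (0,1] by k(0) = 1 and k(x) = (1/x)·tanh((ln 2)/x) − (1/ln 2)·ln cosh((ln 2)/x) for x > 0. Then k is continuous and monotone decreasing, and k is the inverse function of the derivative γ′ : (0,1] → [0,∞) of γ, where γ is the inverse of γ⁻¹(x) = ((1−x)/(2 ln 2))·ln(1−x) + ((1+x)/(2 ln 2))·ln(1+x) restricted to [0,1]. -/

import Mathlib

open Real Set Topology Filter

/-- The function `γ⁻¹(x) = ((1−x)/(2 ln 2))·ln(1−x) + ((1+x)/(2 ln 2))·ln(1+x)`. -/
noncomputable def gammaInv (x : ℝ) : ℝ :=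
  (1 - x) / (2 * Real.log 2) * Real.log (1 - x)
    + (1 + x) / (2 * Real.log 2) * Real.log (1 + x)

/-- The function `k`, defined by `k(0) = 1` and
`k(x) = (1/x)·tanh((ln 2)/x) − (1/ln 2)·ln cosh((ln 2)/x)` for `x > 0`. -/
noncomputable def kFun (x : ℝ) : ℝ :=
  if x = 0 then 1
  else (1 / x) * Real.tanh (Real.log 2 / x) - (1 / Real.log 2) * Real.log (Real.cosh (Real.log 2 / x))

lemma log2_pos : 0 < Real.log 2 := Real.log_pos one_lt_two

lemma gammaInv_zero : gammaInv 0 = 0 := by simp [gammaInv]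

lemma gammaInv_one : gammaInv 1 = 1 := by
  have h := log2_pos
  simp only [gammaInv]
  rw [show (1:ℝ) - 1 = 0 by ring, Real.log_zero]
  field_simp
  norm_num

lemma kFun_zero : kFun 0 = 1 := by simp [kFun]

lemma tanh_eq (u : ℝ) : Real.tanh u = 1 - 2 / (Real.exp (2 * u) + 1) := by
  rw [Real.tanh_eq_sinh_div_cosh, Real.sinh_eq, Real.cosh_eq]
  have h1 : Real.exp u ≠ 0 := (Real.exp_pos u).ne'
  have h2 : Real.exp (2 * u) = Real.exp u * Real.exp u := by
    rw [← Real.exp_add]; ring_nf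
  have h3 : Real.exp (-u) = (Real.exp u)⁻¹ := by
    rw [Real.exp_neg]
  have h4 : (0:ℝ) < Real.exp (2*u) + 1 := by positivity
  rw [h2, h3]
  field_simp
  ring

lemma tanh_lt_one (u : ℝ) : Real.tanh u < 1 := by
  rw [_root_.tanh_eq]
  have : (0:ℝ) < 2 / (Real.exp (2 * u) + 1) := by positivity
  linarith

lemma tanh_pos {u : ℝ} (hu : 0 < u) : 0 < Real.tanh u := by
  rw [_root_.tanh_eq]
  have h1 : (1:ℝ) < Real.exp (2 * u) := by
    rw [show (1:ℝ) = Real.exp 0 by simp]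
    exact Real.exp_lt_exp.2 (by linarith)
  have h2 : (0:ℝ) < Real.exp (2 * u) + 1 := by positivity
  rw [sub_pos, div_lt_one h2]
  linarith

lemma tanh_mono : Monotone Real.tanh := by
  intro a b hab
  rw [_root_.tanh_eq, _root_.tanh_eq]
  have h1 : Real.exp (2 * a) ≤ Real.exp (2 * b) := Real.exp_le_exp.2 (by linarith)
  have h2 : (0:ℝ) < Real.exp (2 * a) + 1 := by positivity
  have h3 : (0:ℝ) < Real.exp (2 * b) + 1 := by positivity
  have : 2 / (Real.exp (2 * b) + 1) ≤ 2 / (Real.exp (2 * a) + 1) := by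
    apply div_le_div_of_nonneg_left (by norm_num) h2 (by linarith)
  linarith

lemma one_sub_tanh (u : ℝ) : 1 - Real.tanh u = Real.exp (-u) / Real.cosh u := by
  rw [Real.tanh_eq_sinh_div_cosh, ← Real.cosh_sub_sinh]
  field_simp [(Real.cosh_pos u).ne']

lemma one_add_tanh (u : ℝ) : 1 + Real.tanh u = Real.exp u / Real.cosh u := by
  rw [Real.tanh_eq_sinh_div_cosh, ← Real.cosh_add_sinh]
  field_simp [(Real.cosh_pos u).ne']

lemma gammaInv_tanh (u : ℝ) :
    gammaInv (Real.tanh u) = (u * Real.tanh u - Real.log (Real.cosh u)) / Real.log 2 := by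
  have hc := Real.cosh_pos u
  have hL := log2_pos
  simp only [gammaInv, one_sub_tanh, one_add_tanh]
  rw [Real.log_div (Real.exp_ne_zero _) hc.ne', Real.log_div (Real.exp_ne_zero _) hc.ne',
    Real.log_exp, Real.log_exp, Real.tanh_eq_sinh_div_cosh]
  field_simp
  rw [← Real.cosh_sub_sinh, ← Real.cosh_add_sinh]
  ring

lemma kFun_eq {t : ℝ} (ht : t ≠ 0) :
    kFun t = gammaInv (Real.tanh (Real.log 2 / t)) := by
  rw [kFun, if_neg ht, gammaInv_tanh]
  have hL := log2_pos.ne'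
  field_simp

lemma hasDerivAt_gammaInv {x : ℝ} (hx : x ∈ Ioo (-1:ℝ) 1) :
    HasDerivAt gammaInv ((Real.log (1 + x) - Real.log (1 - x)) / (2 * Real.log 2)) x := by
  have h1 : (0:ℝ) < 1 - x := by linarith [hx.2]
  have h2 : (0:ℝ) < 1 + x := by linarith [hx.1]
  have hL := log2_pos
  have d1 : HasDerivAt (fun y : ℝ => 1 - y) (-1) x := by
    simpa using (hasDerivAt_id' x).const_sub (1:ℝ)
  have d2 : HasDerivAt (fun y : ℝ => 1 + y) 1 x := by
    simpa using (hasDerivAt_id' x).const_add (1:ℝ)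
  have dl1 : HasDerivAt (fun y : ℝ => Real.log (1 - y)) (-1 / (1 - x)) x := by
    simpa [Function.comp_def, neg_div] using (Real.hasDerivAt_log h1.ne').comp x d1
  have dl2 : HasDerivAt (fun y : ℝ => Real.log (1 + y)) (1 / (1 + x)) x := by
    simpa [Function.comp_def] using (Real.hasDerivAt_log h2.ne').comp x d2
  have p1 : HasDerivAt (fun y : ℝ => (1 - y) * Real.log (1 - y))
      ((-1) * Real.log (1 - x) + (1 - x) * (-1 / (1 - x))) x := d1.mul dl1
  have p2 : HasDerivAt (fun y : ℝ => (1 + y) * Real.log (1 + y))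
      (1 * Real.log (1 + x) + (1 + x) * (1 / (1 + x))) x := d2.mul dl2
  have := ((p1.add p2).div_const (2 * Real.log 2))
  have heq : gammaInv = fun y : ℝ =>
      ((1 - y) * Real.log (1 - y) + (1 + y) * Real.log (1 + y)) / (2 * Real.log 2) := by
    funext y; simp only [gammaInv]; ring
  rw [heq]
  refine this.congr_deriv ?_
  field_simp
  ring

lemma continuous_gammaInv : Continuous gammaInv := by
  have heq : gammaInv = fun y : ℝ =>
      ((1 - y) * Real.log (1 - y)) / (2 * Real.log 2)
        + ((1 + y) * Real.log (1 + y)) / (2 * Real.log 2) := by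
    funext y; simp only [gammaInv]; ring
  rw [heq]
  have c1 : Continuous fun y : ℝ => (1 - y) * Real.log (1 - y) :=
    Real.continuous_mul_log.comp (continuous_const.sub continuous_id)
  have c2 : Continuous fun y : ℝ => (1 + y) * Real.log (1 + y) :=
    Real.continuous_mul_log.comp (continuous_const.add continuous_id)
  exact (c1.div_const _).add (c2.div_const _)

lemma deriv_pos {x : ℝ} (h0 : 0 < x) (h1 : x < 1) :
    0 < (Real.log (1 + x) - Real.log (1 - x)) / (2 * Real.log 2) := by
  apply div_pos _ (by positivity)
  have : Real.log (1 - x) < Real.log (1 + x) :=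
    Real.log_lt_log (by linarith) (by linarith)
  linarith

lemma strictMonoOn_gammaInv : StrictMonoOn gammaInv (Icc (0:ℝ) 1) := by
  apply strictMonoOn_of_deriv_pos (convex_Icc 0 1) continuous_gammaInv.continuousOn
  intro x hx
  rw [interior_Icc] at hx
  rw [(hasDerivAt_gammaInv ⟨by linarith [hx.1], hx.2⟩).deriv]
  exact deriv_pos hx.1 hx.2

lemma gammaInv_surjOn : ∀ y ∈ Icc (0:ℝ) 1, ∃ x ∈ Icc (0:ℝ) 1, gammaInv x = y := by
  intro y hy
  have := intermediate_value_Icc (zero_le_one) continuous_gammaInv.continuousOn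
  rw [gammaInv_zero, gammaInv_one] at this
  exact this hy

lemma gammaInv_mem_Ioo {x : ℝ} (h0 : 0 < x) (h1 : x < 1) : gammaInv x ∈ Ioo (0:ℝ) 1 := by
  constructor
  · rw [← gammaInv_zero]
    exact strictMonoOn_gammaInv ⟨le_refl 0, zero_le_one⟩ ⟨h0.le, h1.le⟩ h0
  · rw [← gammaInv_one]
    exact strictMonoOn_gammaInv ⟨h0.le, h1.le⟩ ⟨zero_le_one, le_refl 1⟩ h1

lemma log_ratio_tanh (u : ℝ) : Real.log (1 + Real.tanh u) - Real.log (1 - Real.tanh u) = 2 * u := by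
  rw [one_add_tanh, one_sub_tanh]
  have hc := Real.cosh_pos u
  rw [Real.log_div (Real.exp_ne_zero _) hc.ne', Real.log_div (Real.exp_ne_zero _) hc.ne',
    Real.log_exp, Real.log_exp]
  ring

lemma slope_lower {x : ℝ} (hx : x ∈ Ico (0:ℝ) 1) :
    (Real.log (1 + x) - Real.log (1 - x)) / (2 * Real.log 2) * (1 - x) ≤ 1 - gammaInv x := by
  have h1 : x < 1 := hx.2
  obtain ⟨c, hc, hslope⟩ := exists_hasDerivAt_eq_slope gammaInv
    (fun y => (Real.log (1 + y) - Real.log (1 - y)) / (2 * Real.log 2)) h1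
    continuous_gammaInv.continuousOn
    (fun y hy => hasDerivAt_gammaInv ⟨by linarith [hx.1, hy.1], hy.2⟩)
  rw [gammaInv_one] at hslope
  have hxc : x < c := hc.1
  have hc1 : c < 1 := hc.2
  have hmono : (Real.log (1 + x) - Real.log (1 - x)) / (2 * Real.log 2)
      ≤ (Real.log (1 + c) - Real.log (1 - c)) / (2 * Real.log 2) := by
    apply (div_le_div_iff_of_pos_right (by positivity)).2
    have l1 : Real.log (1 + x) ≤ Real.log (1 + c) :=
      Real.log_le_log (by linarith [hx.1]) (by linarith)
    have l2 : Real.log (1 - c) ≤ Real.log (1 - x) :=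
      Real.log_le_log (by linarith) (by linarith)
    linarith
  have h1x : (0:ℝ) < 1 - x := by linarith
  calc (Real.log (1 + x) - Real.log (1 - x)) / (2 * Real.log 2) * (1 - x)
      ≤ (Real.log (1 + c) - Real.log (1 - c)) / (2 * Real.log 2) * (1 - x) := by
        exact mul_le_mul_of_nonneg_right hmono h1x.le
    _ = 1 - gammaInv x := by
        rw [hslope]; field_simp

lemma tanh_nonneg {u : ℝ} (hu : 0 ≤ u) : 0 ≤ Real.tanh u := by
  have := tanh_mono hu
  rwa [Real.tanh_zero] at this

lemma tanh_half_log {x : ℝ} (h0 : -1 < x) (h1 : x < 1) :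
    Real.tanh ((Real.log (1 + x) - Real.log (1 - x)) / 2) = x := by
  have h2 : (0:ℝ) < 1 - x := by linarith
  have h3 : (0:ℝ) < 1 + x := by linarith
  rw [_root_.tanh_eq, show 2 * ((Real.log (1 + x) - Real.log (1 - x)) / 2)
      = Real.log ((1 + x) / (1 - x)) by rw [Real.log_div h3.ne' h2.ne']; ring,
    Real.exp_log (by positivity)]
  field_simp
  ring

lemma continuous_tanh : Continuous Real.tanh := by
  have h : Real.tanh = fun x => Real.sinh x / Real.cosh x := funext Real.tanh_eq_sinh_div_cosh
  rw [h]
  exact Real.continuous_sinh.div Real.continuous_cosh fun x => (Real.cosh_pos x).ne'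

open Filter in
lemma tendsto_tanh_atTop : Tendsto Real.tanh atTop (𝓝 1) := by
  have h : Real.tanh = fun u => 1 - 2 / (Real.exp (2 * u) + 1) := funext tanh_eq
  rw [h]
  have h1 : Tendsto (fun u : ℝ => Real.exp (2 * u) + 1) atTop atTop :=
    tendsto_atTop_add_const_right _ 1
      (Real.tendsto_exp_atTop.comp (tendsto_id.const_mul_atTop two_pos))
  have h2 : Tendsto (fun u : ℝ => 2 / (Real.exp (2 * u) + 1)) atTop (𝓝 0) :=
    tendsto_const_nhds.div_atTop h1
  simpa using tendsto_const_nhds.sub h2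

/-- `k` is continuous and monotone decreasing on `[0,∞)`, maps into `(0,1]`, and is the
inverse of the derivative `γ′ : (0,1] → [0,∞)` of `γ`, the inverse of `γ⁻¹` on `[0,1]`. -/
theorem kFun_inverse_of_gamma_deriv (γ γ' : ℝ → ℝ)
    (hγ₁ : ∀ x ∈ Icc (0 : ℝ) 1, γ (gammaInv x) = x)
    (hγ₂ : ∀ y ∈ Icc (0 : ℝ) 1, gammaInv (γ y) = y)
    (hγ' : ∀ y ∈ Ioc (0 : ℝ) 1, HasDerivAt γ (γ' y) y) :
    ContinuousOn kFun (Ici (0 : ℝ)) ∧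
    AntitoneOn kFun (Ici (0 : ℝ)) ∧
    MapsTo kFun (Ici (0 : ℝ)) (Ioc (0 : ℝ) 1) ∧
    (∀ y ∈ Ioc (0 : ℝ) 1, 0 ≤ γ' y ∧ kFun (γ' y) = y) ∧
    (∀ t ∈ Ici (0 : ℝ), γ' (kFun t) = t) := by
  have hL := log2_pos
  have hγone : γ 1 = 1 := by
    have := hγ₁ 1 ⟨zero_le_one, le_refl 1⟩
    rwa [gammaInv_one] at this
  -- the key derivative computation at interior points
  have hkey : ∀ x : ℝ, 0 < x → x < 1 →
      γ' (gammaInv x) = 2 * Real.log 2 / (Real.log (1 + x) - Real.log (1 - x)) := by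
    intro x h0 h1
    set y := gammaInv x with hy_def
    have hy : y ∈ Ioo (0:ℝ) 1 := gammaInv_mem_Ioo h0 h1
    have hγx : γ y = x := hγ₁ x ⟨h0.le, h1.le⟩
    have hdγ : HasDerivAt γ (γ' y) y := hγ' y ⟨hy.1, hy.2.le⟩
    have hdg : HasDerivAt gammaInv
        ((Real.log (1 + x) - Real.log (1 - x)) / (2 * Real.log 2)) (γ y) := by
      rw [hγx]; exact hasDerivAt_gammaInv ⟨by linarith, h1⟩
    have hcomp := hdg.comp y hdγ
    have heq : (fun z : ℝ => z) =ᶠ[nhds y] (gammaInv ∘ γ) := by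
      filter_upwards [Icc_mem_nhds hy.1 hy.2] with z hz
      exact (hγ₂ z hz).symm
    have hid : HasDerivAt (fun z : ℝ => z)
        ((Real.log (1 + x) - Real.log (1 - x)) / (2 * Real.log 2) * γ' y) y :=
      hcomp.congr_of_eventuallyEq heq
    have huniq : (Real.log (1 + x) - Real.log (1 - x)) / (2 * Real.log 2) * γ' y = 1 :=
      hid.unique (hasDerivAt_id y)
    have hD : 0 < (Real.log (1 + x) - Real.log (1 - x)) / (2 * Real.log 2) :=
      deriv_pos h0 h1
    have hden : Real.log (1 + x) - Real.log (1 - x) ≠ 0 := by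
      have : Real.log (1 - x) < Real.log (1 + x) :=
        Real.log_lt_log (by linarith) (by linarith)
      linarith
    field_simp at huniq ⊢
    linarith [huniq]
  -- γ' 1 = 0
  have hγ'one : γ' 1 = 0 := by
    have h1 : HasDerivAt γ (γ' 1) 1 := hγ' 1 ⟨one_pos, le_refl 1⟩
    have hw : HasDerivWithinAt γ 0 (Icc (0:ℝ) 1) 1 := by
      rw [hasDerivWithinAt_iff_isLittleO]
      rw [Asymptotics.isLittleO_iff]
      intro ε hε
      set c : ℝ := 2 * Real.log 2 / ε + 1 with hc_def
      have hc : 0 < c := by positivity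
      set x₀ : ℝ := 1 - Real.exp (-c) with hx₀_def
      have hex : Real.exp (-c) < 1 := by
        rw [Real.exp_lt_one_iff]; linarith
      have hx₀0 : 0 < x₀ := by simp only [hx₀_def]; linarith
      have hx₀1 : x₀ < 1 := by
        have := Real.exp_pos (-c); simp only [hx₀_def]; linarith
      have hlog₀ : Real.log (1 - x₀) = -c := by
        simp only [hx₀_def]; rw [show (1:ℝ) - (1 - Real.exp (-c)) = Real.exp (-c) by ring,
          Real.log_exp]
      have hD₀ : 1 / ε ≤ (Real.log (1 + x₀) - Real.log (1 - x₀)) / (2 * Real.log 2) := by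
        rw [hlog₀]
        have hl : (0:ℝ) ≤ Real.log (1 + x₀) := by
          rw [← Real.log_one]; exact Real.log_le_log one_pos (by linarith)
        have hce : c * ε = 2 * Real.log 2 + ε := by
          rw [hc_def]; field_simp
        rw [div_le_div_iff₀ hε (by positivity)]
        nlinarith [mul_nonneg hl hε.le]
      have hδ : 0 < 1 - gammaInv x₀ := by
        have := (gammaInv_mem_Ioo hx₀0 hx₀1).2; linarith
      have hball : ∀ᶠ z in nhdsWithin 1 (Icc (0:ℝ) 1), |z - 1| < 1 - gammaInv x₀ :=
        eventually_nhdsWithin_of_eventually_nhds (eventually_abs_sub_lt 1 hδ)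
      filter_upwards [hball, self_mem_nhdsWithin] with z hz1 hz2
      obtain ⟨x, hx01, hgx⟩ := gammaInv_surjOn z hz2
      have hγz : γ z = x := by rw [← hgx]; exact hγ₁ x hx01
      simp only [smul_zero, sub_zero, Real.norm_eq_abs, hγz, hγone]
      rcases eq_or_lt_of_le hx01.2 with hxeq | hxlt
      · have hz1' : z = 1 := by rw [← hgx, hxeq, gammaInv_one]
        rw [hxeq, hz1']
        simp
      · -- x < 1
        have hz_le : z ≤ 1 := hz2.2
        have hz_gt : gammaInv x₀ < z := by
          rw [abs_sub_lt_iff] at hz1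
          linarith [hz1.2]
        have hx₀x : x₀ < x := by
          by_contra hcon
          push_neg at hcon
          have : gammaInv x ≤ gammaInv x₀ :=
            strictMonoOn_gammaInv.monotoneOn hx01 ⟨hx₀0.le, hx₀1.le⟩ hcon
          rw [hgx] at this; linarith
        have hslope := slope_lower (x := x) ⟨hx01.1, hxlt⟩
        have hmono : (Real.log (1 + x₀) - Real.log (1 - x₀)) / (2 * Real.log 2)
            ≤ (Real.log (1 + x) - Real.log (1 - x)) / (2 * Real.log 2) := by
          apply div_le_div_of_nonneg_right _ (by positivity)
          have l1 : Real.log (1 + x₀) ≤ Real.log (1 + x) :=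
            Real.log_le_log (by linarith) (by linarith)
          have l2 : Real.log (1 - x) ≤ Real.log (1 - x₀) :=
            Real.log_le_log (by linarith) (by linarith)
          linarith
        have h1x : (0:ℝ) ≤ 1 - x := by linarith
        have key : (1 / ε) * (1 - x) ≤ 1 - gammaInv x := by
          calc (1 / ε) * (1 - x) ≤ (Real.log (1 + x) - Real.log (1 - x)) / (2 * Real.log 2) * (1 - x) :=
                mul_le_mul_of_nonneg_right (le_trans hD₀ hmono) h1x
            _ ≤ 1 - gammaInv x := hslope
        rw [hgx] at key
        rw [abs_of_nonpos (by linarith), abs_of_nonpos (by linarith)]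
        have h' : 1 - x ≤ ε * (1 - z) := by
          have h2 := mul_le_mul_of_nonneg_left key hε.le
          rw [show ε * (1 / ε * (1 - x)) = ε * (1 / ε) * (1 - x) by ring,
            mul_one_div_cancel hε.ne', one_mul] at h2
          linarith
        linarith
    have hU : UniqueDiffWithinAt ℝ (Icc (0:ℝ) 1) 1 :=
      uniqueDiffOn_Icc_zero_one 1 ⟨zero_le_one, le_refl 1⟩
    have e1 := hw.derivWithin hU
    have e2 := (h1.hasDerivWithinAt (s := Icc (0:ℝ) 1)).derivWithin hU
    rw [e2] at e1
    exact e1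
  -- MapsTo
  have hmaps : MapsTo kFun (Ici (0 : ℝ)) (Ioc (0 : ℝ) 1) := by
    intro t ht
    rcases eq_or_lt_of_le (mem_Ici.1 ht) with h0 | h0
    · rw [← h0, kFun_zero]; exact ⟨one_pos, le_refl 1⟩
    · have hu : 0 < Real.log 2 / t := by positivity
      have hx1 : Real.tanh (Real.log 2 / t) < 1 := _root_.tanh_lt_one _
      have hx0 : 0 < Real.tanh (Real.log 2 / t) := tanh_pos hu
      rw [kFun_eq h0.ne']
      have := gammaInv_mem_Ioo hx0 hx1
      exact ⟨this.1, this.2.le⟩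
  refine ⟨?_, ?_, hmaps, ?_, ?_⟩
  · -- continuity
    intro t ht
    rcases eq_or_lt_of_le (mem_Ici.1 ht) with h0 | h0
    · -- at 0
      rw [← h0]
      rw [← continuousWithinAt_Ioi_iff_Ici]
      rw [ContinuousWithinAt, kFun_zero]
      have h1 : Tendsto (fun z : ℝ => Real.log 2 / z) (nhdsWithin 0 (Ioi 0)) atTop := by
        have := tendsto_inv_nhdsGT_zero.const_mul_atTop hL
        simpa [div_eq_mul_inv] using this
      have h2 : Tendsto (fun z : ℝ => gammaInv (Real.tanh (Real.log 2 / z)))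
          (nhdsWithin 0 (Ioi 0)) (nhds 1) := by
        have := (continuous_gammaInv.continuousAt (x := 1)).tendsto.comp
          (tendsto_tanh_atTop.comp h1)
        rwa [gammaInv_one] at this
      apply h2.congr'
      filter_upwards [self_mem_nhdsWithin] with z hz
      exact (kFun_eq (ne_of_gt hz)).symm
    · -- at t > 0
      apply ContinuousAt.continuousWithinAt
      have hcont : ContinuousAt (fun z : ℝ => gammaInv (Real.tanh (Real.log 2 / z))) t := by
        have hdiv : ContinuousAt (fun z : ℝ => Real.log 2 / z) t :=
          continuousAt_const.div continuousAt_id h0.ne'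
        exact continuous_gammaInv.continuousAt.comp (continuous_tanh.continuousAt.comp hdiv)
      apply hcont.congr
      filter_upwards [eventually_ne_nhds h0.ne'] with z hz
      exact (kFun_eq hz).symm
  · -- antitone
    intro s hs t ht hst
    by_cases hs0 : s = 0
    · rw [hs0, kFun_zero]
      exact (hmaps ht).2
    · have hs' : 0 < s := lt_of_le_of_ne (mem_Ici.1 hs) (Ne.symm hs0)
      have ht' : 0 < t := lt_of_lt_of_le hs' hst
      rw [kFun_eq hs'.ne', kFun_eq ht'.ne']
      have hdiv : Real.log 2 / t ≤ Real.log 2 / s :=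
        div_le_div_of_nonneg_left hL.le hs' hst
      have htanh : Real.tanh (Real.log 2 / t) ≤ Real.tanh (Real.log 2 / s) :=
        tanh_mono hdiv
      have m1 : Real.tanh (Real.log 2 / t) ∈ Icc (0:ℝ) 1 :=
        ⟨tanh_nonneg (by positivity), (_root_.tanh_lt_one _).le⟩
      have m2 : Real.tanh (Real.log 2 / s) ∈ Icc (0:ℝ) 1 :=
        ⟨tanh_nonneg (by positivity), (_root_.tanh_lt_one _).le⟩
      exact strictMonoOn_gammaInv.monotoneOn m1 m2 htanh
  · -- part 4
    intro y hy
    obtain ⟨x, hx01, hgx⟩ := gammaInv_surjOn y ⟨hy.1.le, hy.2⟩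
    have hx0 : 0 < x := by
      rcases eq_or_lt_of_le hx01.1 with h | h
      · exfalso; rw [← h, gammaInv_zero] at hgx; exact absurd hgx.symm (ne_of_gt hy.1)
      · exact h
    rcases eq_or_lt_of_le hx01.2 with hx1 | hx1
    · -- x = 1, y = 1
      have hy1 : y = 1 := by rw [← hgx, hx1, gammaInv_one]
      rw [hy1, hγ'one, kFun_zero]
      exact ⟨le_refl 0, rfl⟩
    · -- x < 1
      have hT := hkey x hx0 hx1
      rw [hgx] at hT
      have hden : 0 < Real.log (1 + x) - Real.log (1 - x) := by
        have : Real.log (1 - x) < Real.log (1 + x) :=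
          Real.log_lt_log (by linarith) (by linarith)
        linarith
      have hTpos : 0 < γ' y := by rw [hT]; positivity
      refine ⟨hTpos.le, ?_⟩
      rw [kFun_eq hTpos.ne', hT]
      have harg : Real.log 2 / (2 * Real.log 2 / (Real.log (1 + x) - Real.log (1 - x)))
          = (Real.log (1 + x) - Real.log (1 - x)) / 2 := by
        field_simp
      rw [harg, tanh_half_log (by linarith) hx1, hgx]
  · -- part 5
    intro t ht
    rcases eq_or_lt_of_le (mem_Ici.1 ht) with h0 | h0
    · rw [← h0, kFun_zero, hγ'one]
    · have hu : 0 < Real.log 2 / t := by positivity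
      have hx1 : Real.tanh (Real.log 2 / t) < 1 := _root_.tanh_lt_one _
      have hx0 : 0 < Real.tanh (Real.log 2 / t) := tanh_pos hu
      rw [kFun_eq h0.ne', hkey _ hx0 hx1, log_ratio_tanh]
      field_simp
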